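/- Let Ω ⊆ ℝ² be a compact measurable set and w : ℝ² → ℝ integrable on Ω. Let z₁, z₂ ∈ ℂ satisfy |z₁| > sup{|x| : (x,y) ∈ Ω} and |z₂| > sup{|y| : (x,y) ∈ Ω}. Then the double series Σ_{(h,k)∈ℕ×ℕ} ω_{h,k}/(z₁^{h+1} z₂^{k+1}) is (absolutely) summable, where ω_{h,k} = ∫_Ω x^h y^k w(x,y) dx dy, and its sum equals the Stieltjes function: ∫_Ω w(x,y)/((z₁ − x)(z₂ − y)) dx dy = Σ_{(h,k)∈ℕ×ℕ} ω_{h,k}/(z₁^{h+1} z₂^{k+1}). -/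

import Mathlib

open MeasureTheory

/-- Geometric expansion of `(z - x)⁻¹` for `|x| < |z|`. -/
lemma hasSum_inv_sub (x : ℝ) (z : ℂ) (hx : |x| < ‖z‖) :
    HasSum (fun n : ℕ => ((x : ℂ)) ^ n / z ^ (n + 1)) (z - (x : ℂ))⁻¹ := by
  have hz0 : (0 : ℝ) < ‖z‖ := lt_of_le_of_lt (abs_nonneg x) hx
  have hzne : z ≠ 0 := by
    intro h; rw [h] at hz0; simp at hz0
  have hne : z - (x : ℂ) ≠ 0 := by
    intro h
    have : z = (x : ℂ) := by linear_combination h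
    rw [this, Complex.norm_real, Real.norm_eq_abs] at hx
    exact lt_irrefl _ hx
  have hlt : ‖(x : ℂ) / z‖ < 1 := by
    rw [norm_div, Complex.norm_real, Real.norm_eq_abs,
      div_lt_one hz0]
    exact hx
  have h := (hasSum_geometric_of_norm_lt_one hlt).div_const z
  have hfun : (fun n : ℕ => ((x : ℂ) / z) ^ n / z) =
      fun n : ℕ => ((x : ℂ)) ^ n / z ^ (n + 1) := by
    funext n
    rw [div_pow, pow_succ]
    field_simp
  rw [hfun] at h
  have e : (1 - (x : ℂ) / z)⁻¹ / z = (z - (x : ℂ))⁻¹ := by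
    rw [one_sub_div hzne, inv_div, div_div, mul_comm, ← div_div, div_self hzne, one_div]
  rw [e] at h
  exact h

/-- Norm summability of the geometric series `x^n / z^(n+1)`. -/
lemma summable_norm_inv_sub (x : ℝ) (z : ℂ) (hx : |x| < ‖z‖) :
    Summable (fun n : ℕ => ‖((x : ℂ)) ^ n / z ^ (n + 1)‖) := by
  have hz0 : (0 : ℝ) < ‖z‖ := lt_of_le_of_lt (abs_nonneg x) hx
  have hr : |x| / ‖z‖ < 1 := (div_lt_one hz0).2 hx
  have hr0 : 0 ≤ |x| / ‖z‖ := div_nonneg (abs_nonneg x) hz0.le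
  have h := (summable_geometric_of_lt_one hr0 hr).div_const (‖z‖)
  refine h.congr fun n => ?_
  rw [norm_div, norm_pow, norm_pow, Complex.norm_real, Real.norm_eq_abs,
    div_pow, pow_succ, div_div]

theorem stieltjes_eq_moment_series (Ω : Set (ℝ × ℝ)) (w : ℝ × ℝ → ℝ)
    (hΩc : IsCompact Ω) (hΩm : MeasurableSet Ω)
    (hw : IntegrableOn w Ω)
    (z₁ z₂ : ℂ)
    (hz₁ : sSup ((fun p : ℝ × ℝ => |p.1|) '' Ω) < ‖z₁‖)
    (hz₂ : sSup ((fun p : ℝ × ℝ => |p.2|) '' Ω) < ‖z₂‖) :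
    Summable (fun hk : ℕ × ℕ =>
      (((∫ p in Ω, p.1 ^ hk.1 * p.2 ^ hk.2 * w p) : ℝ) : ℂ)
        / (z₁ ^ (hk.1 + 1) * z₂ ^ (hk.2 + 1))) ∧
    (∫ p in Ω, ((w p : ℝ) : ℂ) / ((z₁ - (p.1 : ℂ)) * (z₂ - (p.2 : ℂ))))
      = ∑' hk : ℕ × ℕ,
          (((∫ p in Ω, p.1 ^ hk.1 * p.2 ^ hk.2 * w p) : ℝ) : ℂ)
            / (z₁ ^ (hk.1 + 1) * z₂ ^ (hk.2 + 1)) := by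
  set M₁ := sSup ((fun p : ℝ × ℝ => |p.1|) '' Ω) with hM₁def
  set M₂ := sSup ((fun p : ℝ × ℝ => |p.2|) '' Ω) with hM₂def
  set A₁ := ‖z₁‖ with hA₁def
  set A₂ := ‖z₂‖ with hA₂def
  have hbdd₁ : BddAbove ((fun p : ℝ × ℝ => |p.1|) '' Ω) :=
    (hΩc.image (continuous_abs.comp continuous_fst)).bddAbove
  have hbdd₂ : BddAbove ((fun p : ℝ × ℝ => |p.2|) '' Ω) :=
    (hΩc.image (continuous_abs.comp continuous_snd)).bddAbove
  have hb₁ : ∀ p ∈ Ω, |p.1| ≤ M₁ := fun p hp => le_csSup hbdd₁ ⟨p, hp, rfl⟩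
  have hb₂ : ∀ p ∈ Ω, |p.2| ≤ M₂ := fun p hp => le_csSup hbdd₂ ⟨p, hp, rfl⟩
  have hM₁0 : 0 ≤ M₁ := by
    rcases Set.eq_empty_or_nonempty Ω with h | ⟨p, hp⟩
    · simp [hM₁def, h, Real.sSup_empty]
    · exact le_trans (abs_nonneg _) (hb₁ p hp)
  have hM₂0 : 0 ≤ M₂ := by
    rcases Set.eq_empty_or_nonempty Ω with h | ⟨p, hp⟩
    · simp [hM₂def, h, Real.sSup_empty]
    · exact le_trans (abs_nonneg _) (hb₂ p hp)
  have hA₁0 : (0 : ℝ) < A₁ := lt_of_le_of_lt hM₁0 hz₁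
  have hA₂0 : (0 : ℝ) < A₂ := lt_of_le_of_lt hM₂0 hz₂
  -- the family of functions
  set F : ℕ × ℕ → ℝ × ℝ → ℂ := fun hk p =>
    ((p.1 ^ hk.1 * p.2 ^ hk.2 * w p : ℝ) : ℂ) / (z₁ ^ (hk.1 + 1) * z₂ ^ (hk.2 + 1))
    with hFdef
  -- integrability of each member
  have hGint : ∀ hk : ℕ × ℕ, IntegrableOn (fun p : ℝ × ℝ =>
      p.1 ^ hk.1 * p.2 ^ hk.2 * w p) Ω := by
    intro hk
    apply Integrable.bdd_mul (c := M₁ ^ hk.1 * M₂ ^ hk.2) hw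
    · exact ((continuous_fst.pow hk.1).mul (continuous_snd.pow hk.2)).aestronglyMeasurable
    · filter_upwards [ae_restrict_mem hΩm] with p hp
      rw [Real.norm_eq_abs, abs_mul, abs_pow, abs_pow]
      exact mul_le_mul (pow_le_pow_left₀ (abs_nonneg _) (hb₁ p hp) _)
        (pow_le_pow_left₀ (abs_nonneg _) (hb₂ p hp) _) (by positivity) (by positivity)
  have hFint : ∀ hk : ℕ × ℕ, IntegrableOn (F hk) Ω := fun hk =>
    ((hGint hk).ofReal).div_const _
  -- value of each integral
  have hFval : ∀ hk : ℕ × ℕ, (∫ p in Ω, F hk p) =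
      (((∫ p in Ω, p.1 ^ hk.1 * p.2 ^ hk.2 * w p) : ℝ) : ℂ)
        / (z₁ ^ (hk.1 + 1) * z₂ ^ (hk.2 + 1)) := by
    intro hk
    rw [hFdef]
    simp only
    rw [integral_div]
    congr 1
    exact integral_ofReal
  -- summability of integrals of norms
  have hnormsum : Summable (fun hk : ℕ × ℕ => ∫ p in Ω, ‖F hk p‖) := by
    have hmaj : Summable (fun hk : ℕ × ℕ =>
        ((∫ p in Ω, |w p|) / (A₁ * A₂)) * ((M₁ / A₁) ^ hk.1 * (M₂ / A₂) ^ hk.2)) := by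
      refine Summable.mul_left _ ?_
      exact Summable.mul_of_nonneg
        (summable_geometric_of_lt_one (div_nonneg hM₁0 hA₁0.le) ((div_lt_one hA₁0).2 hz₁))
        (summable_geometric_of_lt_one (div_nonneg hM₂0 hA₂0.le) ((div_lt_one hA₂0).2 hz₂))
        (fun h => pow_nonneg (div_nonneg hM₁0 hA₁0.le) h)
        (fun k => pow_nonneg (div_nonneg hM₂0 hA₂0.le) k)
    refine Summable.of_nonneg_of_le (fun hk => integral_nonneg fun p => norm_nonneg _)
      (fun hk => ?_) hmaj
    have hle : (∫ p in Ω, ‖F hk p‖) ≤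
        ∫ p in Ω, (M₁ ^ hk.1 * M₂ ^ hk.2 / (A₁ ^ (hk.1 + 1) * A₂ ^ (hk.2 + 1))) * |w p| := by
      apply setIntegral_mono_on ((hFint hk).norm) ((hw.abs).const_mul _) hΩm
      intro p hp
      rw [hFdef]
      simp only
      rw [norm_div, Complex.norm_real, Real.norm_eq_abs, abs_mul, abs_mul, abs_pow, abs_pow]
      rw [norm_mul, norm_pow, norm_pow]
      rw [div_le_iff₀ (by positivity), div_mul_eq_mul_div, div_mul_eq_mul_div,
        le_div_iff₀ (by positivity)]
      have h1 : |p.1| ^ hk.1 ≤ M₁ ^ hk.1 := pow_le_pow_left₀ (abs_nonneg _) (hb₁ p hp) _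
      have h2 : |p.2| ^ hk.2 ≤ M₂ ^ hk.2 := pow_le_pow_left₀ (abs_nonneg _) (hb₂ p hp) _
      calc |p.1| ^ hk.1 * |p.2| ^ hk.2 * |w p| * (A₁ ^ (hk.1 + 1) * A₂ ^ (hk.2 + 1))
          ≤ M₁ ^ hk.1 * M₂ ^ hk.2 * |w p| * (A₁ ^ (hk.1 + 1) * A₂ ^ (hk.2 + 1)) := by
            gcongr <;> positivity
        _ = M₁ ^ hk.1 * M₂ ^ hk.2 * |w p| * (A₁ ^ (hk.1 + 1) * A₂ ^ (hk.2 + 1)) := rfl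
    refine hle.trans (le_of_eq ?_)
    rw [integral_const_mul]
    rw [div_pow, pow_succ, pow_succ] at *
    field_simp
    rw [div_pow, mul_div_assoc', eq_div_iff (pow_pos hA₂0 _).ne']
    ring
  -- the key exchange of sum and integral
  have key := hasSum_integral_of_summable_integral_norm (μ := volume.restrict Ω)
    hFint hnormsum
  constructor
  · exact (key.summable.congr fun hk => hFval hk)
  · have hpt : ∀ p ∈ Ω, (∑' hk : ℕ × ℕ, F hk p) =
        ((w p : ℝ) : ℂ) / ((z₁ - (p.1 : ℂ)) * (z₂ - (p.2 : ℂ))) := by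
      intro p hp
      have hx : |p.1| < A₁ := lt_of_le_of_lt (hb₁ p hp) hz₁
      have hy : |p.2| < A₂ := lt_of_le_of_lt (hb₂ p hp) hz₂
      have h1 := hasSum_inv_sub p.1 z₁ hx
      have h2 := hasSum_inv_sub p.2 z₂ hy
      have hsum := h1.mul h2
        (Summable.mul_norm (summable_norm_inv_sub p.1 z₁ hx)
          (summable_norm_inv_sub p.2 z₂ hy)).of_norm
      have hmul := hsum.mul_left ((w p : ℝ) : ℂ)
      have hfun : (fun hk : ℕ × ℕ => ((w p : ℝ) : ℂ) *
          (((p.1 : ℂ)) ^ hk.1 / z₁ ^ (hk.1 + 1) * (((p.2 : ℂ)) ^ hk.2 / z₂ ^ (hk.2 + 1))))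
          = fun hk => F hk p := by
        funext hk
        rw [hFdef]
        push_cast
        ring
      rw [hfun] at hmul
      rw [hmul.tsum_eq, div_eq_mul_inv, mul_inv]
    have heq : (∫ p in Ω, ((w p : ℝ) : ℂ) / ((z₁ - (p.1 : ℂ)) * (z₂ - (p.2 : ℂ))))
        = ∫ p in Ω, (∑' hk : ℕ × ℕ, F hk p) :=
      setIntegral_congr_fun hΩm fun p hp => (hpt p hp).symm
    rw [heq, ← key.tsum_eq]
    exact tsum_congr fun hk => hFval hk
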